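/- Let U be a nonempty bipartite graph on vertices a₁,a₂,b₁,b₂ and let (R,F) be a contributing labeled fancy U-ribbon of length 2ℓ with the label classes of {a_i^1,b_i^1}, {a_i^2,b_i^2}, and {c_i} disjoint. Then |{F(u) : u ∈ R}| ≤ 3ℓ + 2. If U is empty the bound is 4ℓ + 2. -/

import Mathlib

set_option linter.unusedSectionVars false
set_option maxHeartbeats 4000000

open Finset
open Fin.NatCast

def fancyRibbonEdges {α : Type*} (ℓ : ℕ) [NeZero ℓ]
    (U : Finset (Fin 2 × Fin 2)) (Fa Fb Fc : Fin ℓ → Fin 2 → α) :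
    Multiset (Sym2 α) :=
  (∑ p ∈ (Finset.univ : Finset (Fin ℓ)) ×ˢ U,
    ({s(Fa p.1 p.2.1, Fb p.1 p.2.2),
      s(Fa (p.1 + 1) p.2.1, Fb p.1 p.2.2)} : Multiset (Sym2 α)))
  + ∑ i : Fin ℓ,
    ({s(Fc i 0, Fa i 0), s(Fc i 0, Fa i 1),
      s(Fc i 0, Fb i 0), s(Fc i 0, Fb i 1),
      s(Fc i 1, Fa (i + 1) 0), s(Fc i 1, Fa (i + 1) 1),
      s(Fc i 1, Fb i 0), s(Fc i 1, Fb i 1)} :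
        Multiset (Sym2 α))

section Aux

variable {α : Type*} [DecidableEq α]

private lemma even_two_le {n : ℕ} (h : Even n) (h1 : 0 < n) : 2 ≤ n := by
  rw [Nat.even_iff] at h; omega

private lemma toFinset_card_le {E : Multiset (Sym2 α)}
    (hE : ∀ e, Even (E.count e)) : 2 * E.toFinset.card ≤ Multiset.card E := by
  have := Multiset.toFinset_sum_count_eq E
  calc 2 * E.toFinset.card = ∑ _e ∈ E.toFinset, 2 := by
        rw [Finset.sum_const, smul_eq_mul, mul_comm]
    _ ≤ ∑ e ∈ E.toFinset, E.count e := by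
        refine Finset.sum_le_sum fun e he => ?_
        exact even_two_le (hE e) (Multiset.count_pos.mpr (Multiset.mem_toFinset.mp he))
    _ = Multiset.card E := this

private lemma ribbon_core (u : ℕ → α) (n : ℕ) (E : Multiset (Sym2 α)) (R : Finset ℕ)
    (h0 : 0 ∈ R)
    (hR : ∀ k, 0 < k → k < n → k ∉ R → s(u (k-1), u k) ∈ E)
    (hE : ∀ e, Even (E.count e)) :
    2 * ((Finset.range n).image u).card ≤ Multiset.card E + 2 * R.card := by
  classical
  set I : Finset α := (Finset.range n).image u with hI
  set RI : Finset α := R.image u with hRI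
  have hsub : I ⊆ (I \ RI) ∪ RI := by
    intro v hv
    by_cases h : v ∈ RI
    · exact Finset.mem_union_right _ h
    · exact Finset.mem_union_left _ (Finset.mem_sdiff.mpr ⟨hv, h⟩)
  have hcard1 : I.card ≤ (I \ RI).card + R.card :=
    le_trans (Finset.card_le_card hsub)
      (le_trans (Finset.card_union_le _ _)
        (by gcongr; exact Finset.card_image_le))
  have hex : ∀ v ∈ I, ∃ k, k < n ∧ u k = v := by
    intro v hv
    obtain ⟨k, hk, hk2⟩ := Finset.mem_image.mp hv
    exact ⟨k, Finset.mem_range.mp hk, hk2⟩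
  set j : α → ℕ := fun v => sInf {k | k < n ∧ u k = v} with hj
  have hjmem : ∀ v ∈ I, j v < n ∧ u (j v) = v := by
    intro v hv
    exact Nat.sInf_mem (hex v hv)
  have hjmin : ∀ v, ∀ m, m < n → u m = v → j v ≤ m := by
    intro v m h1 h2; exact Nat.sInf_le ⟨h1, h2⟩
  have hinj : (I \ RI).card ≤ E.toFinset.card := by
    refine Finset.card_le_card_of_injOn
      (fun v => s(u (j v - 1), v)) ?_ ?_
    · intro v hv
      obtain ⟨hvI, hvR⟩ := Finset.mem_sdiff.mp hv
      obtain ⟨hjn, hju⟩ := hjmem v hvI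
      have hjR : j v ∉ R := by
        intro hc
        exact hvR (Finset.mem_image.mpr ⟨j v, hc, hju⟩)
      have hj0 : 0 < j v := by
        rcases Nat.eq_zero_or_pos (j v) with h | h
        · exact absurd (by rw [h]; exact h0) hjR
        · exact h
      have := hR (j v) hj0 hjn hjR
      rw [hju] at this
      exact Multiset.mem_toFinset.mpr this
    · intro v hv w hw heq
      by_contra hne
      obtain ⟨hvI, hvR⟩ := Finset.mem_sdiff.mp hv
      obtain ⟨hwI, hwR⟩ := Finset.mem_sdiff.mp hw
      obtain ⟨hjnv, hjuv⟩ := hjmem v hvI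
      obtain ⟨hjnw, hjuw⟩ := hjmem w hwI
      have hj0v : 0 < j v := by
        rcases Nat.eq_zero_or_pos (j v) with h | h
        · exact absurd (Finset.mem_image.mpr ⟨j v, by rw [h]; exact h0, hjuv⟩) hvR
        · exact h
      have hj0w : 0 < j w := by
        rcases Nat.eq_zero_or_pos (j w) with h | h
        · exact absurd (Finset.mem_image.mpr ⟨j w, by rw [h]; exact h0, hjuw⟩) hwR
        · exact h
      rw [Sym2.eq_iff] at heq
      rcases heq with ⟨_, h2⟩ | ⟨h1, h2⟩
      · exact hne h2
      have hv1 : j w ≤ j v - 1 := hjmin w _ (by omega) h1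
      have hw1 : j v ≤ j w - 1 := hjmin v _ (by omega) h2.symm
      omega
  have hD := toFinset_card_le hE
  omega

private lemma single_walk (u : ℕ → α) (n : ℕ) (E : Multiset (Sym2 α))
    (hR : ∀ k, 0 < k → k < n → s(u (k-1), u k) ∈ E)
    (hE : ∀ e, Even (E.count e)) :
    2 * ((Finset.range n).image u).card ≤ Multiset.card E + 2 := by
  have := ribbon_core u n E {0} (Finset.mem_singleton_self 0)
    (fun k hk0 hkn _ => hR k hk0 hkn) hE
  simpa using this

private lemma two_walks (u1 u2 : ℕ → α) (n1 n2 : ℕ) (E1 E2 : Multiset (Sym2 α))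
    (h1 : ∀ k, 0 < k → k < n1 → s(u1 (k-1), u1 k) ∈ E1)
    (h2 : ∀ k, 0 < k → k < n2 → s(u2 (k-1), u2 k) ∈ E2)
    (hE : ∀ e, Even ((E1 + E2).count e)) :
    2 * (((Finset.range n1).image u1) ∪ ((Finset.range n2).image u2)).card
      ≤ Multiset.card E1 + Multiset.card E2 + 4 := by
  classical
  set u : ℕ → α := fun k => if k < n1 then u1 k else u2 (k - n1) with hu
  have himg : (Finset.range (n1+n2)).image u
      = ((Finset.range n1).image u1) ∪ ((Finset.range n2).image u2) := by
    ext v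
    simp only [Finset.mem_image, Finset.mem_union, Finset.mem_range]
    constructor
    · rintro ⟨k, hk, rfl⟩
      by_cases h : k < n1
      · exact Or.inl ⟨k, h, by simp [hu, h]⟩
      · exact Or.inr ⟨k - n1, by omega, by simp [hu, h]⟩
    · rintro (⟨k, hk, rfl⟩ | ⟨k, hk, rfl⟩)
      · exact ⟨k, by omega, by simp [hu, hk]⟩
      · exact ⟨k + n1, by omega, by simp [hu, show ¬ (k + n1 < n1) by omega]⟩
  have hcore := ribbon_core u (n1 + n2) (E1 + E2) {0, n1} (by simp) ?_ hE
  · rw [himg] at hcore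
    have hR2 : ({0, n1} : Finset ℕ).card ≤ 2 := Finset.card_insert_le _ _ |>.trans (by simp)
    have hcE : Multiset.card (E1 + E2) = Multiset.card E1 + Multiset.card E2 :=
      Multiset.card_add _ _
    omega
  · intro k hk0 hkn hkR
    simp only [Finset.mem_insert, Finset.mem_singleton] at hkR
    push_neg at hkR
    by_cases h : k < n1
    · have : s(u (k-1), u k) = s(u1 (k-1), u1 k) := by
        simp [hu, h, show k - 1 < n1 by omega]
      rw [this]
      exact Multiset.mem_add.mpr (Or.inl (h1 k hk0 h))
    · have hk1 : n1 < k := by omega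
      have : s(u (k-1), u k) = s(u2 ((k - n1) - 1), u2 (k - n1)) := by
        have e1 : ¬ (k - 1 < n1) := by omega
        have e2 : k - 1 - n1 = (k - n1) - 1 := by omega
        simp [hu, h, e1, e2]
      rw [this]
      exact Multiset.mem_add.mpr (Or.inr (h2 (k - n1) (by omega) (by omega)))

private lemma card_finsum {ι β : Type*} (s : Finset ι) (f : ι → Multiset β) :
    Multiset.card (∑ i ∈ s, f i) = ∑ i ∈ s, Multiset.card (f i) := by
  classical
  induction s using Finset.cons_induction with
  | empty => simp
  | cons a s ha ih => simp [Finset.sum_cons, ih]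

variable {ℓ : ℕ} [NeZero ℓ]

private def u4w (g0 g1 g2 g3 : Fin ℓ → α) (j : ℕ) : α :=
  if j % 4 = 0 then g0 ((j / 4 : ℕ) : Fin ℓ)
  else if j % 4 = 1 then g1 ((j / 4 : ℕ) : Fin ℓ)
  else if j % 4 = 2 then g2 ((j / 4 : ℕ) : Fin ℓ)
  else g3 ((j / 4 : ℕ) : Fin ℓ)

private def E4w (g0 g1 g2 g3 : Fin ℓ → α) : Multiset (Sym2 α) :=
  ∑ i : Fin ℓ, ({s(g1 i, g0 i), s(g1 i, g2 i),
    s(g3 i, g2 i), s(g3 i, g0 (i+1))} : Multiset (Sym2 α))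

private lemma E4w_card (g0 g1 g2 g3 : Fin ℓ → α) :
    Multiset.card (E4w g0 g1 g2 g3) = 4 * ℓ := by
  rw [E4w, card_finsum]
  simp [mul_comm]

private lemma u4w_hR (g0 g1 g2 g3 : Fin ℓ → α) :
    ∀ k, 0 < k → k < 4*ℓ →
      s(u4w g0 g1 g2 g3 (k-1), u4w g0 g1 g2 g3 k) ∈ E4w g0 g1 g2 g3 := by
  intro k hk0 hkn
  have hu : ∀ j, u4w g0 g1 g2 g3 j =
    if j % 4 = 0 then g0 ((j / 4 : ℕ) : Fin ℓ)
    else if j % 4 = 1 then g1 ((j / 4 : ℕ) : Fin ℓ)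
    else if j % 4 = 2 then g2 ((j / 4 : ℕ) : Fin ℓ)
    else g3 ((j / 4 : ℕ) : Fin ℓ) := fun j => rfl
  have hmem : ∀ (i : Fin ℓ) (e : Sym2 α),
      (e = s(g1 i, g0 i) ∨ e = s(g1 i, g2 i) ∨
       e = s(g3 i, g2 i) ∨ e = s(g3 i, g0 (i+1))) →
      e ∈ E4w g0 g1 g2 g3 := by
    intro i e he
    refine Multiset.mem_sum.mpr ⟨i, Finset.mem_univ i, ?_⟩
    rcases he with h|h|h|h <;> simp [h]
  rcases (show k % 4 = 0 ∨ k % 4 = 1 ∨ k % 4 = 2 ∨ k % 4 = 3 by omega) with h|h|h|h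
  · have h1 : (k-1) % 4 = 3 := by omega
    have h2 : (k-1) / 4 = k/4 - 1 := by omega
    have hcast : ((k/4 : ℕ) : Fin ℓ) = ((k/4 - 1 : ℕ) : Fin ℓ) + 1 := by
      conv_lhs => rw [show k/4 = (k/4 - 1) + 1 by omega]
      rw [Nat.cast_add, Nat.cast_one]
    rw [hu (k-1), hu k, h1, h2, h]
    norm_num
    rw [hcast]
    exact hmem _ _ (Or.inr (Or.inr (Or.inr rfl)))
  · have h1 : (k-1) % 4 = 0 := by omega
    have h2 : (k-1) / 4 = k/4 := by omega
    rw [hu (k-1), hu k, h1, h2, h]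
    norm_num
    rw [Sym2.eq_swap]
    exact hmem _ _ (Or.inl rfl)
  · have h1 : (k-1) % 4 = 1 := by omega
    have h2 : (k-1) / 4 = k/4 := by omega
    rw [hu (k-1), hu k, h1, h2, h]
    norm_num
    exact hmem _ _ (Or.inr (Or.inl rfl))
  · have h1 : (k-1) % 4 = 2 := by omega
    have h2 : (k-1) / 4 = k/4 := by omega
    rw [hu (k-1), hu k, h1, h2, h]
    norm_num
    rw [Sym2.eq_swap]
    exact hmem _ _ (Or.inr (Or.inr (Or.inl rfl)))

private lemma u4w_cover (g0 g1 g2 g3 : Fin ℓ → α) (i : Fin ℓ) :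
    g0 i ∈ (Finset.range (4*ℓ)).image (u4w g0 g1 g2 g3) ∧
    g1 i ∈ (Finset.range (4*ℓ)).image (u4w g0 g1 g2 g3) ∧
    g2 i ∈ (Finset.range (4*ℓ)).image (u4w g0 g1 g2 g3) ∧
    g3 i ∈ (Finset.range (4*ℓ)).image (u4w g0 g1 g2 g3) := by
  have hi := i.isLt
  refine ⟨?_, ?_, ?_, ?_⟩
  · refine Finset.mem_image.mpr ⟨4*i.val, Finset.mem_range.mpr (by omega), ?_⟩
    have e1 : (4*i.val) % 4 = 0 := by omega
    have e2 : (4*i.val) / 4 = i.val := by omega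
    simp [u4w, e1, e2, Fin.cast_val_eq_self]
  · refine Finset.mem_image.mpr ⟨4*i.val+1, Finset.mem_range.mpr (by omega), ?_⟩
    have e1 : (4*i.val+1) % 4 = 1 := by omega
    have e2 : (4*i.val+1) / 4 = i.val := by omega
    simp [u4w, e1, e2, Fin.cast_val_eq_self]
  · refine Finset.mem_image.mpr ⟨4*i.val+2, Finset.mem_range.mpr (by omega), ?_⟩
    have e1 : (4*i.val+2) % 4 = 2 := by omega
    have e2 : (4*i.val+2) / 4 = i.val := by omega
    simp [u4w, e1, e2, Fin.cast_val_eq_self]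
  · refine Finset.mem_image.mpr ⟨4*i.val+3, Finset.mem_range.mpr (by omega), ?_⟩
    have e1 : (4*i.val+3) % 4 = 3 := by omega
    have e2 : (4*i.val+3) / 4 = i.val := by omega
    simp [u4w, e1, e2, Fin.cast_val_eq_self]

private def u2w (g0 g1 : Fin ℓ → α) (j : ℕ) : α :=
  if j % 2 = 0 then g0 ((j / 2 : ℕ) : Fin ℓ) else g1 ((j / 2 : ℕ) : Fin ℓ)

private def E2w (g0 g1 : Fin ℓ → α) : Multiset (Sym2 α) :=
  ∑ i : Fin ℓ, ({s(g0 i, g1 i), s(g0 (i+1), g1 i)} : Multiset (Sym2 α))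

private lemma E2w_card (g0 g1 : Fin ℓ → α) :
    Multiset.card (E2w g0 g1) = 2 * ℓ := by
  rw [E2w, card_finsum]
  simp [mul_comm]

private lemma u2w_hR (g0 g1 : Fin ℓ → α) :
    ∀ k, 0 < k → k < 2*ℓ →
      s(u2w g0 g1 (k-1), u2w g0 g1 k) ∈ E2w g0 g1 := by
  intro k hk0 hkn
  have hu : ∀ j, u2w g0 g1 j =
      if j % 2 = 0 then g0 ((j / 2 : ℕ) : Fin ℓ) else g1 ((j / 2 : ℕ) : Fin ℓ) :=
    fun j => rfl
  have hmem : ∀ (i : Fin ℓ) (e : Sym2 α),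
      (e = s(g0 i, g1 i) ∨ e = s(g0 (i+1), g1 i)) →
      e ∈ E2w g0 g1 := by
    intro i e he
    refine Multiset.mem_sum.mpr ⟨i, Finset.mem_univ i, ?_⟩
    rcases he with h|h <;> simp [h]
  rcases (show k % 2 = 0 ∨ k % 2 = 1 by omega) with h|h
  · have h1 : (k-1) % 2 = 1 := by omega
    have h2 : (k-1) / 2 = k/2 - 1 := by omega
    have hcast : ((k/2 : ℕ) : Fin ℓ) = ((k/2 - 1 : ℕ) : Fin ℓ) + 1 := by
      conv_lhs => rw [show k/2 = (k/2 - 1) + 1 by omega]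
      rw [Nat.cast_add, Nat.cast_one]
    rw [hu (k-1), hu k, h1, h2, h]
    norm_num
    rw [hcast, Sym2.eq_swap]
    exact hmem _ _ (Or.inr rfl)
  · have h1 : (k-1) % 2 = 0 := by omega
    have h2 : (k-1) / 2 = k/2 := by omega
    rw [hu (k-1), hu k, h1, h2, h]
    norm_num
    exact hmem _ _ (Or.inl rfl)

private lemma u2w_cover (g0 g1 : Fin ℓ → α) (i : Fin ℓ) :
    g0 i ∈ (Finset.range (2*ℓ)).image (u2w g0 g1) ∧
    g1 i ∈ (Finset.range (2*ℓ)).image (u2w g0 g1) := by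
  have hi := i.isLt
  constructor
  · refine Finset.mem_image.mpr ⟨2*i.val, Finset.mem_range.mpr (by omega), ?_⟩
    have e1 : (2*i.val) % 2 = 0 := by omega
    have e2 : (2*i.val) / 2 = i.val := by omega
    simp [u2w, e1, e2, Fin.cast_val_eq_self]
  · refine Finset.mem_image.mpr ⟨2*i.val+1, Finset.mem_range.mpr (by omega), ?_⟩
    have e1 : (2*i.val+1) % 2 = 1 := by omega
    have e2 : (2*i.val+1) / 2 = i.val := by omega
    simp [u2w, e1, e2, Fin.cast_val_eq_self]

private lemma perm8 (e1 e2 e3 e4 e5 e6 e7 e8 : Sym2 α) :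
    ({e1,e2,e3,e4,e5,e6,e7,e8} : Multiset (Sym2 α)) = {e1,e3,e7,e5} + {e2,e4,e8,e6} := by
  ext x
  simp only [Multiset.insert_eq_cons, Multiset.count_cons, Multiset.count_add,
    Multiset.count_singleton]
  split_ifs <;> omega

private lemma perm8' (e1 e2 e3 e4 e5 e6 e7 e8 : Sym2 α) :
    ({e1,e3,e7,e5} : Multiset (Sym2 α)) + {e2,e4,e8,e6} = {e2,e3,e7,e6} + {e1,e4,e8,e5} := by
  ext x
  simp only [Multiset.insert_eq_cons, Multiset.count_cons, Multiset.count_add,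
    Multiset.count_singleton]
  split_ifs <;> omega

private lemma pair4 (x y : Sym2 α) :
    ({x,x,y,y} : Multiset (Sym2 α)) = {x,y} + {x,y} := by
  ext z
  simp only [Multiset.insert_eq_cons, Multiset.count_cons, Multiset.count_add,
    Multiset.count_singleton]
  split_ifs <;> omega

private lemma map_finsum_ms {ι : Type*} (f : Sym2 α → Sym2 α) (s : Finset ι)
    (g : ι → Multiset (Sym2 α)) :
    Multiset.map f (∑ i ∈ s, g i) = ∑ i ∈ s, Multiset.map f (g i) := by
  classical
  induction s using Finset.cons_induction with
  | empty => simp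
  | cons a s ha ih => rw [Finset.sum_cons, Finset.sum_cons, Multiset.map_add, ih]

private lemma even_part {T M N : Multiset (Sym2 α)}
    (hT : ∀ e, Even (T.count e)) (hMN : T = M + N)
    (hsep : ∀ e, e ∈ M → e ∉ N) : ∀ e, Even (M.count e) := by
  intro e
  by_cases he : e ∈ M
  · have h0 : N.count e = 0 := Multiset.count_eq_zero.mpr (hsep e he)
    have := hT e
    rw [hMN, Multiset.count_add, h0, add_zero] at this
    exact this
  · rw [Multiset.count_eq_zero.mpr he]
    exact Even.zero

private lemma even_filter_card {M : Multiset (Sym2 α)}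
    (h : ∀ e, Even (M.count e)) (p : Sym2 α → Prop) [DecidablePred p] :
    Even (Multiset.card (M.filter p)) := by
  rw [← Multiset.toFinset_sum_count_eq]
  refine Finset.even_sum _ fun e he => ?_
  rw [Multiset.count_filter]
  split_ifs
  · exact h e
  · exact Even.zero

private lemma even_map {M : Multiset (Sym2 α)} (h : ∀ e, Even (M.count e))
    (f : Sym2 α → Sym2 α) : ∀ e, Even ((M.map f).count e) := by
  intro e
  rw [Multiset.count_map]
  exact even_filter_card h _

private lemma s2_ne_of_sep {p r u w : α} {Y : Finset α}
    (hp : p ∉ Y) (hr : r ∉ Y) (hu : u ∈ Y ∨ w ∈ Y) :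
    s(p, r) ≠ s(u, w) := by
  intro hx
  rw [Sym2.eq_iff] at hx
  revert hx
  rintro (⟨h1, h2⟩ | ⟨h1, h2⟩) <;> rcases hu with h | h
  · exact hp (h1 ▸ h)
  · exact hr (h2 ▸ h)
  · exact hr (h2 ▸ h)
  · exact hp (h1 ▸ h)


private lemma mem_E2w_shape {g0 g1 : Fin ℓ → α} {e : Sym2 α} (he : e ∈ E2w g0 g1) :
    ∃ i j : Fin ℓ, e = s(g0 i, g1 j) := by
  obtain ⟨i, _, hm⟩ := Multiset.mem_sum.mp he
  simp only [Multiset.insert_eq_cons, Multiset.mem_cons, Multiset.mem_singleton] at hm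
  rcases hm with h | h
  · exact ⟨i, i, h⟩
  · exact ⟨i+1, i, h⟩

private lemma mem_E4w_shape {g0 g1 g2 g3 : Fin ℓ → α} {e : Sym2 α}
    (he : e ∈ E4w g0 g1 g2 g3) :
    ∃ i j : Fin ℓ, e = s(g1 i, g0 j) ∨ e = s(g1 i, g2 j) ∨
      e = s(g3 i, g2 j) ∨ e = s(g3 i, g0 j) := by
  obtain ⟨i, _, hm⟩ := Multiset.mem_sum.mp he
  simp only [Multiset.insert_eq_cons, Multiset.mem_cons, Multiset.mem_singleton] at hm
  rcases hm with h | h | h | h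
  · exact ⟨i, i, Or.inl h⟩
  · exact ⟨i, i, Or.inr (Or.inl h)⟩
  · exact ⟨i, i, Or.inr (Or.inr (Or.inl h))⟩
  · exact ⟨i, i+1, Or.inr (Or.inr (Or.inr h))⟩

end Aux

theorem fancy_ribbon_unique_label_bound {α : Type*} [DecidableEq α]
    (ℓ : ℕ) [NeZero ℓ] (U : Finset (Fin 2 × Fin 2))
    (Fa Fb Fc : Fin ℓ → Fin 2 → α)
    (hlab : ∀ e ∈ fancyRibbonEdges ℓ U Fa Fb Fc, ¬ Sym2.IsDiag e)
    (hcontrib : ∀ e : Sym2 α,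
      Even ((fancyRibbonEdges ℓ U Fa Fb Fc).count e))
    (hd12 : Disjoint
      ((Finset.univ.image fun i : Fin ℓ => Fa i 0) ∪
        (Finset.univ.image fun i : Fin ℓ => Fb i 0))
      ((Finset.univ.image fun i : Fin ℓ => Fa i 1) ∪
        (Finset.univ.image fun i : Fin ℓ => Fb i 1)))
    (hd1c : Disjoint
      ((Finset.univ.image fun i : Fin ℓ => Fa i 0) ∪
        (Finset.univ.image fun i : Fin ℓ => Fb i 0))
      (Finset.univ.image fun p : Fin ℓ × Fin 2 => Fc p.1 p.2))
    (hd2c : Disjoint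
      ((Finset.univ.image fun i : Fin ℓ => Fa i 1) ∪
        (Finset.univ.image fun i : Fin ℓ => Fb i 1))
      (Finset.univ.image fun p : Fin ℓ × Fin 2 => Fc p.1 p.2)) :
    (U.Nonempty →
      (((Finset.univ.image fun p : Fin ℓ × Fin 2 => Fa p.1 p.2) ∪
        (Finset.univ.image fun p : Fin ℓ × Fin 2 => Fb p.1 p.2) ∪
        (Finset.univ.image fun p : Fin ℓ × Fin 2 => Fc p.1 p.2)).card ≤
          3 * ℓ + 2)) ∧
    (U = ∅ →
      (((Finset.univ.image fun p : Fin ℓ × Fin 2 => Fa p.1 p.2) ∪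
        (Finset.univ.image fun p : Fin ℓ × Fin 2 => Fb p.1 p.2) ∪
        (Finset.univ.image fun p : Fin ℓ × Fin 2 => Fc p.1 p.2)).card ≤
          4 * ℓ + 2)) := by
  classical
  have hl : 0 < ℓ := Nat.pos_of_ne_zero (NeZero.ne ℓ)
  have fin2 : ∀ x : Fin 2, x = 0 ∨ x = 1 := by decide
  set D1 : Finset α := (Finset.univ.image fun i : Fin ℓ => Fa i 0) ∪
    (Finset.univ.image fun i : Fin ℓ => Fb i 0) with hD1
  set D2 : Finset α := (Finset.univ.image fun i : Fin ℓ => Fa i 1) ∪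
    (Finset.univ.image fun i : Fin ℓ => Fb i 1) with hD2
  set DC : Finset α := Finset.univ.image fun p : Fin ℓ × Fin 2 => Fc p.1 p.2 with hDC
  have mD1a : ∀ i : Fin ℓ, Fa i 0 ∈ D1 := fun i => by
    rw [hD1]; exact Finset.mem_union_left _ (Finset.mem_image_of_mem _ (Finset.mem_univ i))
  have mD1b : ∀ i : Fin ℓ, Fb i 0 ∈ D1 := fun i => by
    rw [hD1]; exact Finset.mem_union_right _ (Finset.mem_image_of_mem _ (Finset.mem_univ i))
  have mD2a : ∀ i : Fin ℓ, Fa i 1 ∈ D2 := fun i => by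
    rw [hD2]; exact Finset.mem_union_left _ (Finset.mem_image_of_mem _ (Finset.mem_univ i))
  have mD2b : ∀ i : Fin ℓ, Fb i 1 ∈ D2 := fun i => by
    rw [hD2]; exact Finset.mem_union_right _ (Finset.mem_image_of_mem _ (Finset.mem_univ i))
  have mDC : ∀ (i : Fin ℓ) (x : Fin 2), Fc i x ∈ DC := fun i x => by
    rw [hDC]; exact Finset.mem_image.mpr ⟨(i,x), Finset.mem_univ _, rfl⟩
  have n12 : ∀ v ∈ D1, v ∉ D2 := fun v hv => Finset.disjoint_left.mp hd12 hv
  have n21 : ∀ v ∈ D2, v ∉ D1 := fun v hv => Finset.disjoint_right.mp hd12 hv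
  have n1C : ∀ v ∈ D1, v ∉ DC := fun v hv => Finset.disjoint_left.mp hd1c hv
  have n2C : ∀ v ∈ D2, v ∉ DC := fun v hv => Finset.disjoint_left.mp hd2c hv
  have nC1 : ∀ v ∈ DC, v ∉ D1 := fun v hv => Finset.disjoint_right.mp hd1c hv
  have nC2 : ∀ v ∈ DC, v ∉ D2 := fun v hv => Finset.disjoint_right.mp hd2c hv
  set MU : Multiset (Sym2 α) :=
    ∑ z ∈ U, E2w (fun i : Fin ℓ => Fa i z.1) (fun i : Fin ℓ => Fb i z.2) with hMU
  set CL1 : Multiset (Sym2 α) :=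
    E4w (fun i : Fin ℓ => Fa i 0) (fun i : Fin ℓ => Fc i 0)
      (fun i : Fin ℓ => Fb i 0) (fun i : Fin ℓ => Fc i 1) with hCL1
  set CL2 : Multiset (Sym2 α) :=
    E4w (fun i : Fin ℓ => Fa i 1) (fun i : Fin ℓ => Fc i 0)
      (fun i : Fin ℓ => Fb i 1) (fun i : Fin ℓ => Fc i 1) with hCL2
  have hdecomp : fancyRibbonEdges ℓ U Fa Fb Fc = MU + (CL1 + CL2) := by
    rw [fancyRibbonEdges, hMU, hCL1, hCL2]
    congr 1
    · rw [Finset.sum_product, Finset.sum_comm]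
      rfl
    · rw [E4w, E4w, ← Finset.sum_add_distrib]
      refine Finset.sum_congr rfl fun i _ => perm8 _ _ _ _ _ _ _ _
  have htot : ∀ e, Even ((MU + (CL1 + CL2)).count e) := fun e => hdecomp ▸ hcontrib e
  have shCL1 : ∀ e ∈ CL1, ∃ c w, c ∈ DC ∧ w ∈ D1 ∧ e = s(c, w) := by
    intro e he; rw [hCL1] at he
    obtain ⟨i, j, h⟩ := mem_E4w_shape he
    rcases h with h|h|h|h
    exacts [⟨_,_, mDC i 0, mD1a j, h⟩, ⟨_,_, mDC i 0, mD1b j, h⟩,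
      ⟨_,_, mDC i 1, mD1b j, h⟩, ⟨_,_, mDC i 1, mD1a j, h⟩]
  have shCL2 : ∀ e ∈ CL2, ∃ c w, c ∈ DC ∧ w ∈ D2 ∧ e = s(c, w) := by
    intro e he; rw [hCL2] at he
    obtain ⟨i, j, h⟩ := mem_E4w_shape he
    rcases h with h|h|h|h
    exacts [⟨_,_, mDC i 0, mD2a j, h⟩, ⟨_,_, mDC i 0, mD2b j, h⟩,
      ⟨_,_, mDC i 1, mD2b j, h⟩, ⟨_,_, mDC i 1, mD2a j, h⟩]
  have shMU : ∀ e ∈ MU, ∃ u w, (u ∈ D1 ∨ u ∈ D2) ∧ (w ∈ D1 ∨ w ∈ D2) ∧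
      e = s(u, w) := by
    intro e he; rw [hMU] at he
    obtain ⟨z, hz, hm⟩ := Multiset.mem_sum.mp he
    obtain ⟨i, j, h⟩ := mem_E2w_shape hm
    refine ⟨Fa i z.1, Fb j z.2, ?_, ?_, h⟩
    · rcases fin2 z.1 with hx|hx <;> rw [hx]
      exacts [Or.inl (mD1a i), Or.inr (mD2a i)]
    · rcases fin2 z.2 with hx|hx <;> rw [hx]
      exacts [Or.inl (mD1b j), Or.inr (mD2b j)]
  -- elements of MU have no endpoint in DC, elements of CL* have one
  have sep_CL_MU : ∀ e, e ∈ CL1 + CL2 → e ∉ MU := by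
    intro e he hm
    obtain ⟨u, w, hu, hw, heq⟩ := shMU e hm
    have hc : ∃ c w', c ∈ DC ∧ e = s(c, w') := by
      rcases Multiset.mem_add.mp he with h|h
      · obtain ⟨c, w', hc, _, h⟩ := shCL1 e h; exact ⟨c, w', hc, h⟩
      · obtain ⟨c, w', hc, _, h⟩ := shCL2 e h; exact ⟨c, w', hc, h⟩
    obtain ⟨c, w', hcC, heq2⟩ := hc
    have hu' : u ∉ DC := by
      rcases hu with h|h; exacts [n1C u h, n2C u h]
    have hw' : w ∉ DC := by
      rcases hw with h|h; exacts [n1C w h, n2C w h]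
    exact s2_ne_of_sep (Y := DC) hu' hw' (Or.inl hcC) (heq ▸ heq2)
  have hCL1e : ∀ e, Even (CL1.count e) := by
    refine even_part (M := CL1) (N := CL2 + MU) htot (by abel) ?_
    intro e he hN
    obtain ⟨c, w, hcC, hwD, rfl⟩ := shCL1 e he
    rcases Multiset.mem_add.mp hN with hN | hN
    · obtain ⟨c', w', _, hw', heq⟩ := shCL2 _ hN
      exact s2_ne_of_sep (Y := D2) (nC2 c hcC) (n12 w hwD) (Or.inr hw') heq
    · exact sep_CL_MU _ (Multiset.mem_add.mpr (Or.inl he)) hN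
  have hCL2e : ∀ e, Even (CL2.count e) := by
    refine even_part (M := CL2) (N := CL1 + MU) htot (by abel) ?_
    intro e he hN
    obtain ⟨c, w, hcC, hwD, rfl⟩ := shCL2 e he
    rcases Multiset.mem_add.mp hN with hN | hN
    · obtain ⟨c', w', _, hw', heq⟩ := shCL1 _ hN
      exact s2_ne_of_sep (Y := D1) (nC1 c hcC) (n21 w hwD) (Or.inr hw') heq
    · exact sep_CL_MU _ (Multiset.mem_add.mpr (Or.inr he)) hN
  have hMce : ∀ e, Even ((CL1 + CL2).count e) := fun e => by
    rw [Multiset.count_add]; exact (hCL1e e).add (hCL2e e)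
  -- coverage helpers
  set VA : Finset α := Finset.univ.image fun p : Fin ℓ × Fin 2 => Fa p.1 p.2 with hVA
  set VB : Finset α := Finset.univ.image fun p : Fin ℓ × Fin 2 => Fb p.1 p.2 with hVB
  have hVAsub : ∀ (S : Finset α), (∀ i : Fin ℓ, Fa i 0 ∈ S) → (∀ i : Fin ℓ, Fa i 1 ∈ S) →
      VA ⊆ S := by
    intro S h0 h1 v hv
    rw [hVA] at hv
    obtain ⟨p, _, rfl⟩ := Finset.mem_image.mp hv
    rcases fin2 p.2 with h|h <;> rw [h]
    exacts [h0 p.1, h1 p.1]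
  have hVBsub : ∀ (S : Finset α), (∀ i : Fin ℓ, Fb i 0 ∈ S) → (∀ i : Fin ℓ, Fb i 1 ∈ S) →
      VB ⊆ S := by
    intro S h0 h1 v hv
    rw [hVB] at hv
    obtain ⟨p, _, rfl⟩ := Finset.mem_image.mp hv
    rcases fin2 p.2 with h|h <;> rw [h]
    exacts [h0 p.1, h1 p.1]
  have hDCsub : ∀ (S : Finset α), (∀ (i : Fin ℓ) (x : Fin 2), Fc i x ∈ S) → DC ⊆ S := by
    intro S h v hv
    rw [hDC] at hv
    obtain ⟨p, _, rfl⟩ := Finset.mem_image.mp hv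
    exact h p.1 p.2
  -- the two c-walks
  set I1 : Finset α := (Finset.range (4*ℓ)).image
    (u4w (fun i : Fin ℓ => Fa i 0) (fun i : Fin ℓ => Fc i 0)
      (fun i : Fin ℓ => Fb i 0) (fun i : Fin ℓ => Fc i 1)) with hI1
  set I2 : Finset α := (Finset.range (4*ℓ)).image
    (u4w (fun i : Fin ℓ => Fa i 1) (fun i : Fin ℓ => Fc i 0)
      (fun i : Fin ℓ => Fb i 1) (fun i : Fin ℓ => Fc i 1)) with hI2
  have hR1 : ∀ k, 0 < k → k < 4*ℓ →
      s(u4w (fun i : Fin ℓ => Fa i 0) (fun i : Fin ℓ => Fc i 0)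
        (fun i : Fin ℓ => Fb i 0) (fun i : Fin ℓ => Fc i 1) (k-1),
        u4w (fun i : Fin ℓ => Fa i 0) (fun i : Fin ℓ => Fc i 0)
        (fun i : Fin ℓ => Fb i 0) (fun i : Fin ℓ => Fc i 1) k) ∈ CL1 := by
    intro k h1 h2
    rw [hCL1]
    exact u4w_hR _ _ _ _ k h1 h2
  have hR2 : ∀ k, 0 < k → k < 4*ℓ →
      s(u4w (fun i : Fin ℓ => Fa i 1) (fun i : Fin ℓ => Fc i 0)
        (fun i : Fin ℓ => Fb i 1) (fun i : Fin ℓ => Fc i 1) (k-1),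
        u4w (fun i : Fin ℓ => Fa i 1) (fun i : Fin ℓ => Fc i 0)
        (fun i : Fin ℓ => Fb i 1) (fun i : Fin ℓ => Fc i 1) k) ∈ CL2 := by
    intro k h1 h2
    rw [hCL2]
    exact u4w_hR _ _ _ _ k h1 h2
  have hcov1 : ∀ i : Fin ℓ,
      Fa i 0 ∈ I1 ∧ Fc i 0 ∈ I1 ∧ Fb i 0 ∈ I1 ∧ Fc i 1 ∈ I1 := by
    intro i
    have := u4w_cover (fun i : Fin ℓ => Fa i 0) (fun i : Fin ℓ => Fc i 0)
      (fun i : Fin ℓ => Fb i 0) (fun i : Fin ℓ => Fc i 1) i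
    rw [hI1]
    exact this
  have hcov2 : ∀ i : Fin ℓ,
      Fa i 1 ∈ I2 ∧ Fc i 0 ∈ I2 ∧ Fb i 1 ∈ I2 ∧ Fc i 1 ∈ I2 := by
    intro i
    have := u4w_cover (fun i : Fin ℓ => Fa i 1) (fun i : Fin ℓ => Fc i 0)
      (fun i : Fin ℓ => Fb i 1) (fun i : Fin ℓ => Fc i 1) i
    rw [hI2]
    exact this
  have hcCL1 : Multiset.card CL1 = 4*ℓ := by rw [hCL1]; exact E4w_card _ _ _ _
  have hcCL2 : Multiset.card CL2 = 4*ℓ := by rw [hCL2]; exact E4w_card _ _ _ _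
  constructor
  · -- nonempty case
    intro hUne
    by_cases h00 : ((0, 0) : Fin 2 × Fin 2) ∈ U
    · -- diagonal case (0,0): walk on F00 plus the c–L2 walk
      have hF00e : ∀ e,
          Even ((E2w (fun i : Fin ℓ => Fa i 0) (fun i : Fin ℓ => Fb i 0)).count e) := by
        refine even_part (M := E2w (fun i : Fin ℓ => Fa i 0) (fun i : Fin ℓ => Fb i 0))
          (N := (∑ z ∈ U.erase (0,0),
            E2w (fun i : Fin ℓ => Fa i z.1) (fun i : Fin ℓ => Fb i z.2)) + (CL1 + CL2))
          htot ?_ ?_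
        · rw [hMU, ← Finset.add_sum_erase U _ h00, add_assoc]
        · intro e he hN
          obtain ⟨i, j, hsh⟩ := mem_E2w_shape he
          have hp1 : Fa i 0 ∉ D2 := n12 _ (mD1a i)
          have hp2 : Fb j 0 ∉ D2 := n12 _ (mD1b j)
          have hp1C : Fa i 0 ∉ DC := n1C _ (mD1a i)
          have hp2C : Fb j 0 ∉ DC := n1C _ (mD1b j)
          rcases Multiset.mem_add.mp hN with hN | hN
          · obtain ⟨z, hz, hm⟩ := Multiset.mem_sum.mp hN
            have hzne : z ≠ ((0 : Fin 2), (0 : Fin 2)) := (Finset.mem_erase.mp hz).1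
            obtain ⟨i', j', heq⟩ := mem_E2w_shape hm
            have hend : Fa i' z.1 ∈ D2 ∨ Fb j' z.2 ∈ D2 := by
              rcases fin2 z.1 with h1|h1 <;> rcases fin2 z.2 with h2|h2
              · exact absurd (Prod.ext h1 h2) hzne
              · right; rw [h2]; exact mD2b j'
              · left; rw [h1]; exact mD2a i'
              · left; rw [h1]; exact mD2a i'
            exact s2_ne_of_sep (Y := D2) hp1 hp2 hend (hsh ▸ heq)
          · rcases Multiset.mem_add.mp hN with h | h
            · obtain ⟨c, w, hc, _, heq⟩ := shCL1 _ h
              exact s2_ne_of_sep (Y := DC) hp1C hp2C (Or.inl hc) (hsh ▸ heq)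
            · obtain ⟨c, w, hc, _, heq⟩ := shCL2 _ h
              exact s2_ne_of_sep (Y := DC) hp1C hp2C (Or.inl hc) (hsh ▸ heq)
      have hb := two_walks
        (u2w (fun i : Fin ℓ => Fa i 0) (fun i : Fin ℓ => Fb i 0)) _ (2*ℓ) (4*ℓ)
        (E2w (fun i : Fin ℓ => Fa i 0) (fun i : Fin ℓ => Fb i 0)) CL2
        (u2w_hR _ _) hR2
        (fun e => by rw [Multiset.count_add]; exact (hF00e e).add (hCL2e e))
      rw [← hI2] at hb
      set IX : Finset α := (Finset.range (2*ℓ)).image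
        (u2w (fun i : Fin ℓ => Fa i 0) (fun i : Fin ℓ => Fb i 0)) with hIX
      have hcovX : ∀ i : Fin ℓ, Fa i 0 ∈ IX ∧ Fb i 0 ∈ IX := by
        intro i
        have := u2w_cover (fun i : Fin ℓ => Fa i 0) (fun i : Fin ℓ => Fb i 0) i
        rw [hIX]; exact this
      have hsub : VA ∪ VB ∪ DC ⊆ IX ∪ I2 := by
        refine Finset.union_subset (Finset.union_subset ?_ ?_) ?_
        · exact hVAsub _ (fun i => Finset.mem_union_left _ (hcovX i).1)
            (fun i => Finset.mem_union_right _ (hcov2 i).1)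
        · exact hVBsub _ (fun i => Finset.mem_union_left _ (hcovX i).2)
            (fun i => Finset.mem_union_right _ (hcov2 i).2.2.1)
        · refine hDCsub _ fun i x => ?_
          rcases fin2 x with h|h <;> rw [h]
          exacts [Finset.mem_union_right _ (hcov2 i).2.1,
            Finset.mem_union_right _ (hcov2 i).2.2.2]
      have hcard := Finset.card_le_card hsub
      rw [hcCL2, E2w_card] at hb
      omega
    · by_cases h11 : ((1, 1) : Fin 2 × Fin 2) ∈ U
      · -- diagonal case (1,1)
        have hF11e : ∀ e,
            Even ((E2w (fun i : Fin ℓ => Fa i 1) (fun i : Fin ℓ => Fb i 1)).count e) := by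
          refine even_part (M := E2w (fun i : Fin ℓ => Fa i 1) (fun i : Fin ℓ => Fb i 1))
            (N := (∑ z ∈ U.erase (1,1),
              E2w (fun i : Fin ℓ => Fa i z.1) (fun i : Fin ℓ => Fb i z.2)) + (CL1 + CL2))
            htot ?_ ?_
          · rw [hMU, ← Finset.add_sum_erase U _ h11, add_assoc]
          · intro e he hN
            obtain ⟨i, j, hsh⟩ := mem_E2w_shape he
            have hp1 : Fa i 1 ∉ D1 := n21 _ (mD2a i)
            have hp2 : Fb j 1 ∉ D1 := n21 _ (mD2b j)
            have hp1C : Fa i 1 ∉ DC := n2C _ (mD2a i)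
            have hp2C : Fb j 1 ∉ DC := n2C _ (mD2b j)
            rcases Multiset.mem_add.mp hN with hN | hN
            · obtain ⟨z, hz, hm⟩ := Multiset.mem_sum.mp hN
              have hzne : z ≠ ((1 : Fin 2), (1 : Fin 2)) := (Finset.mem_erase.mp hz).1
              obtain ⟨i', j', heq⟩ := mem_E2w_shape hm
              have hend : Fa i' z.1 ∈ D1 ∨ Fb j' z.2 ∈ D1 := by
                rcases fin2 z.1 with h1|h1 <;> rcases fin2 z.2 with h2|h2
                · left; rw [h1]; exact mD1a i'
                · left; rw [h1]; exact mD1a i'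
                · right; rw [h2]; exact mD1b j'
                · exact absurd (Prod.ext h1 h2) hzne
              exact s2_ne_of_sep (Y := D1) hp1 hp2 hend (hsh ▸ heq)
            · rcases Multiset.mem_add.mp hN with h | h
              · obtain ⟨c, w, hc, _, heq⟩ := shCL1 _ h
                exact s2_ne_of_sep (Y := DC) hp1C hp2C (Or.inl hc) (hsh ▸ heq)
              · obtain ⟨c, w, hc, _, heq⟩ := shCL2 _ h
                exact s2_ne_of_sep (Y := DC) hp1C hp2C (Or.inl hc) (hsh ▸ heq)
        have hb := two_walks
          (u2w (fun i : Fin ℓ => Fa i 1) (fun i : Fin ℓ => Fb i 1)) _ (2*ℓ) (4*ℓ)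
          (E2w (fun i : Fin ℓ => Fa i 1) (fun i : Fin ℓ => Fb i 1)) CL1
          (u2w_hR _ _) hR1
          (fun e => by rw [Multiset.count_add]; exact (hF11e e).add (hCL1e e))
        rw [← hI1] at hb
        set IX : Finset α := (Finset.range (2*ℓ)).image
          (u2w (fun i : Fin ℓ => Fa i 1) (fun i : Fin ℓ => Fb i 1)) with hIX
        have hcovX : ∀ i : Fin ℓ, Fa i 1 ∈ IX ∧ Fb i 1 ∈ IX := by
          intro i
          have := u2w_cover (fun i : Fin ℓ => Fa i 1) (fun i : Fin ℓ => Fb i 1) i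
          rw [hIX]; exact this
        have hsub : VA ∪ VB ∪ DC ⊆ IX ∪ I1 := by
          refine Finset.union_subset (Finset.union_subset ?_ ?_) ?_
          · exact hVAsub _ (fun i => Finset.mem_union_right _ (hcov1 i).1)
              (fun i => Finset.mem_union_left _ (hcovX i).1)
          · exact hVBsub _ (fun i => Finset.mem_union_right _ (hcov1 i).2.2.1)
              (fun i => Finset.mem_union_left _ (hcovX i).2)
          · refine hDCsub _ fun i x => ?_
            rcases fin2 x with h|h <;> rw [h]
            exacts [Finset.mem_union_right _ (hcov1 i).2.1,
              Finset.mem_union_right _ (hcov1 i).2.2.2]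
        have hcard := Finset.card_le_card hsub
        rw [hcCL1, E2w_card] at hb
        omega
      · -- cross cases
        by_cases h01 : ((0, 1) : Fin 2 × Fin 2) ∈ U
        · by_cases h10 : ((1, 0) : Fin 2 × Fin 2) ∈ U
          · -- both cross pairs
            have hUeq : U = {((0,1) : Fin 2 × Fin 2), (1,0)} := by
              apply Finset.Subset.antisymm
              · intro z hz
                obtain ⟨z1, z2⟩ := z
                rcases fin2 z1 with rfl|rfl <;> rcases fin2 z2 with rfl|rfl
                · exact absurd hz h00
                · exact Finset.mem_insert_self _ _
                · exact Finset.mem_insert_of_mem (Finset.mem_singleton_self _)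
                · exact absurd hz h11
              · intro z hz
                simp only [Finset.mem_insert, Finset.mem_singleton] at hz
                rcases hz with rfl|rfl
                exacts [h01, h10]
            have hMUe : ∀ e, Even (MU.count e) :=
              even_part (M := MU) (N := CL1 + CL2) htot rfl
                (fun e he hN => sep_CL_MU e hN he)
            have hMUeq : MU = E2w (fun i : Fin ℓ => Fa i 0) (fun i : Fin ℓ => Fb i 1)
                + E2w (fun i : Fin ℓ => Fa i 1) (fun i : Fin ℓ => Fb i 0) := by
              rw [hMU, hUeq, Finset.sum_pair (by decide)]
            by_cases hnc : ℓ ≤ DC.card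
            · -- many c-labels : use the two c-walks separately
              have hb1 := single_walk _ (4*ℓ) CL1 hR1 hCL1e
              have hb2 := single_walk _ (4*ℓ) CL2 hR2 hCL2e
              rw [← hI1, hcCL1] at hb1
              rw [← hI2, hcCL2] at hb2
              have hsub : VA ∪ VB ∪ DC ⊆ I1 ∪ I2 := by
                refine Finset.union_subset (Finset.union_subset ?_ ?_) ?_
                · exact hVAsub _ (fun i => Finset.mem_union_left _ (hcov1 i).1)
                    (fun i => Finset.mem_union_right _ (hcov2 i).1)
                · exact hVBsub _ (fun i => Finset.mem_union_left _ (hcov1 i).2.2.1)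
                    (fun i => Finset.mem_union_right _ (hcov2 i).2.2.1)
                · refine hDCsub _ fun i x => ?_
                  rcases fin2 x with h|h <;> rw [h]
                  exacts [Finset.mem_union_left _ (hcov1 i).2.1,
                    Finset.mem_union_left _ (hcov1 i).2.2.2]
              have hDCI : DC ⊆ I1 ∩ I2 := by
                refine hDCsub _ fun i x => Finset.mem_inter.mpr ?_
                rcases fin2 x with h|h <;> rw [h]
                exacts [⟨(hcov1 i).2.1, (hcov2 i).2.1⟩,
                  ⟨(hcov1 i).2.2.2, (hcov2 i).2.2.2⟩]
              have hcard := Finset.card_le_card hsub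
              have hui := Finset.card_union_add_card_inter I1 I2
              have hDCcard := Finset.card_le_card hDCI
              omega
            · -- few c-labels : use the two cross walks
              have hb := two_walks
                (u2w (fun i : Fin ℓ => Fa i 0) (fun i : Fin ℓ => Fb i 1))
                (u2w (fun i : Fin ℓ => Fa i 1) (fun i : Fin ℓ => Fb i 0))
                (2*ℓ) (2*ℓ) _ _ (u2w_hR _ _) (u2w_hR _ _)
                (fun e => by rw [← hMUeq]; exact hMUe e)
              set IX : Finset α := (Finset.range (2*ℓ)).image
                (u2w (fun i : Fin ℓ => Fa i 0) (fun i : Fin ℓ => Fb i 1)) with hIX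
              set IY : Finset α := (Finset.range (2*ℓ)).image
                (u2w (fun i : Fin ℓ => Fa i 1) (fun i : Fin ℓ => Fb i 0)) with hIY
              have hcovX : ∀ i : Fin ℓ, Fa i 0 ∈ IX ∧ Fb i 1 ∈ IX := by
                intro i
                have := u2w_cover (fun i : Fin ℓ => Fa i 0) (fun i : Fin ℓ => Fb i 1) i
                rw [hIX]; exact this
              have hcovY : ∀ i : Fin ℓ, Fa i 1 ∈ IY ∧ Fb i 0 ∈ IY := by
                intro i
                have := u2w_cover (fun i : Fin ℓ => Fa i 1) (fun i : Fin ℓ => Fb i 0) i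
                rw [hIY]; exact this
              have hsub : VA ∪ VB ∪ DC ⊆ (IX ∪ IY) ∪ DC := by
                refine Finset.union_subset (Finset.union_subset ?_ ?_) ?_
                · exact (hVAsub _
                    (fun i => Finset.mem_union_left _ (hcovX i).1)
                    (fun i => Finset.mem_union_right _ (hcovY i).1)).trans
                    (Finset.subset_union_left)
                · exact (hVBsub _
                    (fun i => Finset.mem_union_right _ (hcovY i).2)
                    (fun i => Finset.mem_union_left _ (hcovX i).2)).trans
                    (Finset.subset_union_left)
                · exact Finset.subset_union_right
              have hcard := Finset.card_le_card hsub
              have hcu := Finset.card_union_le (IX ∪ IY) DC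
              rw [E2w_card, E2w_card] at hb
              omega
          · -- only (0,1)
            have hUeq : U = {((0,1) : Fin 2 × Fin 2)} := by
              apply Finset.Subset.antisymm
              · intro z hz
                obtain ⟨z1, z2⟩ := z
                rcases fin2 z1 with rfl|rfl <;> rcases fin2 z2 with rfl|rfl
                · exact absurd hz h00
                · exact Finset.mem_singleton_self _
                · exact absurd hz h10
                · exact absurd hz h11
              · intro z hz
                simp only [Finset.mem_singleton] at hz
                subst hz; exact h01
            have hMUe : ∀ e, Even (MU.count e) :=
              even_part (M := MU) (N := CL1 + CL2) htot rfl
                (fun e he hN => sep_CL_MU e hN he)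
            have hMUeq : MU = E2w (fun i : Fin ℓ => Fa i 0) (fun i : Fin ℓ => Fb i 1) := by
              rw [hMU, hUeq, Finset.sum_singleton]
            rw [hMUeq] at hMUe
            -- the quotient map collapsing A₀ ∪ B₁ to the point Fa 0 0
            set Q : Finset α := (Finset.univ.image fun i : Fin ℓ => Fa i 0) ∪
              (Finset.univ.image fun i : Fin ℓ => Fb i 1) with hQdef
            set q : α → α := fun v => if v ∈ Q then Fa 0 0 else v with hq
            have hQsub : ∀ v ∈ Q, v ∈ D1 ∨ v ∈ D2 := by
              intro v hv
              rw [hQdef] at hv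
              rcases Finset.mem_union.mp hv with h|h
              · left; rw [hD1]; exact Finset.mem_union_left _ h
              · right; rw [hD2]; exact Finset.mem_union_right _ h
            have hqC : ∀ (i : Fin ℓ) (x : Fin 2), q (Fc i x) = Fc i x := by
              intro i x
              rw [hq]
              simp only
              rw [if_neg]
              intro h
              rcases hQsub _ h with h'|h'
              · exact nC1 _ (mDC i x) h'
              · exact nC2 _ (mDC i x) h'
            have hqa0 : ∀ i : Fin ℓ, q (Fa i 0) = Fa 0 0 := by
              intro i
              rw [hq]
              simp only
              rw [if_pos]
              rw [hQdef]
              exact Finset.mem_union_left _ (Finset.mem_image_of_mem _ (Finset.mem_univ i))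
            have hqb1 : ∀ i : Fin ℓ, q (Fb i 1) = Fa 0 0 := by
              intro i
              rw [hq]
              simp only
              rw [if_pos]
              rw [hQdef]
              exact Finset.mem_union_right _ (Finset.mem_image_of_mem _ (Finset.mem_univ i))
            -- split the c-edges along the two mixed walks
            set S01E : Multiset (Sym2 α) := E4w (fun i : Fin ℓ => Fa i 1)
              (fun i : Fin ℓ => Fc i 0) (fun i : Fin ℓ => Fb i 0)
              (fun i : Fin ℓ => Fc i 1) with hS01
            set S10E : Multiset (Sym2 α) := E4w (fun i : Fin ℓ => Fa i 0)
              (fun i : Fin ℓ => Fc i 0) (fun i : Fin ℓ => Fb i 1)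
              (fun i : Fin ℓ => Fc i 1) with hS10
            have hsplit : CL1 + CL2 = S01E + S10E := by
              rw [hCL1, hCL2, hS01, hS10, E4w, E4w, E4w, E4w,
                ← Finset.sum_add_distrib, ← Finset.sum_add_distrib]
              exact Finset.sum_congr rfl fun i _ => perm8' _ _ _ _ _ _ _ _
            have hq2T : ∀ e, Even ((Multiset.map (Sym2.map q) S10E).count e) := by
              have hmap : Multiset.map (Sym2.map q) S10E =
                  (∑ i : Fin ℓ, ({s(Fc i 0, Fa 0 0), s(Fc i 1, Fa 0 0)} :
                    Multiset (Sym2 α)))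
                  + (∑ i : Fin ℓ, ({s(Fc i 0, Fa 0 0), s(Fc i 1, Fa 0 0)} :
                    Multiset (Sym2 α))) := by
                rw [hS10, E4w, map_finsum_ms, ← Finset.sum_add_distrib]
                refine Finset.sum_congr rfl fun i _ => ?_
                show Multiset.map (Sym2.map q) _ = _
                rw [show ∀ (a b c d : Sym2 α),
                    Multiset.map (Sym2.map q) ({a,b,c,d} : Multiset (Sym2 α)) =
                    {Sym2.map q a, Sym2.map q b, Sym2.map q c, Sym2.map q d} from
                    fun a b c d => by
                      simp [Multiset.insert_eq_cons, Multiset.map_cons, Multiset.map_singleton]]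
                simp only [Sym2.map_pair_eq, hqC, hqa0, hqb1]
                exact pair4 _ _
              intro e
              rw [hmap, Multiset.count_add]
              exact ⟨_, rfl⟩
            have hq2Mc : ∀ e, Even ((Multiset.map (Sym2.map q) (CL1 + CL2)).count e) :=
              even_map hMce (Sym2.map q)
            have hq2S : ∀ e, Even ((Multiset.map (Sym2.map q) S01E).count e) := by
              intro e
              have heq : (Multiset.map (Sym2.map q) S01E).count e
                  + (Multiset.map (Sym2.map q) S10E).count e
                  = (Multiset.map (Sym2.map q) (CL1 + CL2)).count e := by
                rw [hsplit, Multiset.map_add, Multiset.count_add]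
              have h1 := hq2T e
              have h2 := hq2Mc e
              rw [Nat.even_iff] at h1 h2 ⊢
              omega
            -- the quotiented walk
            have hRq : ∀ k, 0 < k → k < 4*ℓ →
                s((fun j => q (u4w (fun i : Fin ℓ => Fa i 1)
                  (fun i : Fin ℓ => Fc i 0) (fun i : Fin ℓ => Fb i 0)
                  (fun i : Fin ℓ => Fc i 1) j)) (k-1),
                  (fun j => q (u4w (fun i : Fin ℓ => Fa i 1)
                  (fun i : Fin ℓ => Fc i 0) (fun i : Fin ℓ => Fb i 0)
                  (fun i : Fin ℓ => Fc i 1) j)) k) ∈ Multiset.map (Sym2.map q) S01E := by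
              intro k h1 h2
              have hm := u4w_hR (fun i : Fin ℓ => Fa i 1) (fun i : Fin ℓ => Fc i 0)
                (fun i : Fin ℓ => Fb i 0) (fun i : Fin ℓ => Fc i 1) k h1 h2
              rw [← hS01] at hm
              simp only
              rw [← Sym2.map_pair_eq q]
              exact Multiset.mem_map_of_mem _ hm
            have hb := two_walks
              (u2w (fun i : Fin ℓ => Fa i 0) (fun i : Fin ℓ => Fb i 1))
              (fun j => q (u4w (fun i : Fin ℓ => Fa i 1)
                (fun i : Fin ℓ => Fc i 0) (fun i : Fin ℓ => Fb i 0)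
                (fun i : Fin ℓ => Fc i 1) j))
              (2*ℓ) (4*ℓ)
              (E2w (fun i : Fin ℓ => Fa i 0) (fun i : Fin ℓ => Fb i 1))
              (Multiset.map (Sym2.map q) S01E)
              (u2w_hR _ _) hRq
              (fun e => by rw [Multiset.count_add]; exact (hMUe e).add (hq2S e))
            set IX : Finset α := (Finset.range (2*ℓ)).image
              (u2w (fun i : Fin ℓ => Fa i 0) (fun i : Fin ℓ => Fb i 1)) with hIX
            set IQ : Finset α := (Finset.range (4*ℓ)).image
              (fun j => q (u4w (fun i : Fin ℓ => Fa i 1)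
                (fun i : Fin ℓ => Fc i 0) (fun i : Fin ℓ => Fb i 0)
                (fun i : Fin ℓ => Fc i 1) j)) with hIQ
            have hcovX : ∀ i : Fin ℓ, Fa i 0 ∈ IX ∧ Fb i 1 ∈ IX := by
              intro i
              have := u2w_cover (fun i : Fin ℓ => Fa i 0) (fun i : Fin ℓ => Fb i 1) i
              rw [hIX]; exact this
            have hIQmem : ∀ v, v ∈ (Finset.range (4*ℓ)).image
                (u4w (fun i : Fin ℓ => Fa i 1) (fun i : Fin ℓ => Fc i 0)
                  (fun i : Fin ℓ => Fb i 0) (fun i : Fin ℓ => Fc i 1)) → q v ∈ IQ := by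
              intro v hv
              obtain ⟨j, hj, rfl⟩ := Finset.mem_image.mp hv
              rw [hIQ]
              exact Finset.mem_image.mpr ⟨j, hj, rfl⟩
            have hQmemX : ∀ v, v ∈ Q → v ∈ IX := by
              intro v hv
              rw [hQdef] at hv
              rcases Finset.mem_union.mp hv with h|h <;>
                obtain ⟨i, _, rfl⟩ := Finset.mem_image.mp h
              · exact (hcovX i).1
              · exact (hcovX i).2
            have hsub : VA ∪ VB ∪ DC ⊆ IX ∪ IQ := by
              have hgen : ∀ v, v ∈ (Finset.range (4*ℓ)).image
                  (u4w (fun i : Fin ℓ => Fa i 1) (fun i : Fin ℓ => Fc i 0)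
                    (fun i : Fin ℓ => Fb i 0) (fun i : Fin ℓ => Fc i 1)) →
                  v ∈ IX ∪ IQ := by
                intro v hv
                by_cases hvQ : v ∈ Q
                · exact Finset.mem_union_left _ (hQmemX v hvQ)
                · have : q v = v := by rw [hq]; simp only; rw [if_neg hvQ]
                  exact Finset.mem_union_right _ (this ▸ hIQmem v hv)
              refine Finset.union_subset (Finset.union_subset ?_ ?_) ?_
              · refine hVAsub _ (fun i => Finset.mem_union_left _ (hcovX i).1)
                  (fun i => hgen _ (u4w_cover _ _ _ _ i).1)
              · refine hVBsub _ (fun i => hgen _ (u4w_cover _ _ _ _ i).2.2.1)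
                  (fun i => Finset.mem_union_left _ (hcovX i).2)
              · refine hDCsub _ fun i x => ?_
                rcases fin2 x with h|h <;> rw [h]
                · have := hIQmem _ (u4w_cover _ _ _ _ i).2.1
                  rw [hqC] at this
                  exact Finset.mem_union_right _ this
                · have := hIQmem _ (u4w_cover _ _ _ _ i).2.2.2
                  rw [hqC] at this
                  exact Finset.mem_union_right _ this
            have hcard := Finset.card_le_card hsub
            have hcS : Multiset.card (Multiset.map (Sym2.map q) S01E) = 4*ℓ := by
              rw [Multiset.card_map, hS01]
              exact E4w_card _ _ _ _
            rw [E2w_card, hcS] at hb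
            omega
        · by_cases h10 : ((1, 0) : Fin 2 × Fin 2) ∈ U
          · -- only (1,0)
            have hUeq : U = {((1,0) : Fin 2 × Fin 2)} := by
              apply Finset.Subset.antisymm
              · intro z hz
                obtain ⟨z1, z2⟩ := z
                rcases fin2 z1 with rfl|rfl <;> rcases fin2 z2 with rfl|rfl
                · exact absurd hz h00
                · exact absurd hz h01
                · exact Finset.mem_singleton_self _
                · exact absurd hz h11
              · intro z hz
                simp only [Finset.mem_singleton] at hz
                subst hz; exact h10
            have hMUe : ∀ e, Even (MU.count e) :=
              even_part (M := MU) (N := CL1 + CL2) htot rfl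
                (fun e he hN => sep_CL_MU e hN he)
            have hMUeq : MU = E2w (fun i : Fin ℓ => Fa i 1) (fun i : Fin ℓ => Fb i 0) := by
              rw [hMU, hUeq, Finset.sum_singleton]
            rw [hMUeq] at hMUe
            -- the quotient map collapsing A₁ ∪ B₀ to the point Fa 0 1
            set Q : Finset α := (Finset.univ.image fun i : Fin ℓ => Fa i 1) ∪
              (Finset.univ.image fun i : Fin ℓ => Fb i 0) with hQdef
            set q : α → α := fun v => if v ∈ Q then Fa 0 1 else v with hq
            have hQsub : ∀ v ∈ Q, v ∈ D1 ∨ v ∈ D2 := by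
              intro v hv
              rw [hQdef] at hv
              rcases Finset.mem_union.mp hv with h|h
              · right; rw [hD2]; exact Finset.mem_union_left _ h
              · left; rw [hD1]; exact Finset.mem_union_right _ h
            have hqC : ∀ (i : Fin ℓ) (x : Fin 2), q (Fc i x) = Fc i x := by
              intro i x
              rw [hq]
              simp only
              rw [if_neg]
              intro h
              rcases hQsub _ h with h'|h'
              · exact nC1 _ (mDC i x) h'
              · exact nC2 _ (mDC i x) h'
            have hqa1 : ∀ i : Fin ℓ, q (Fa i 1) = Fa 0 1 := by
              intro i
              rw [hq]
              simp only
              rw [if_pos]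
              rw [hQdef]
              exact Finset.mem_union_left _ (Finset.mem_image_of_mem _ (Finset.mem_univ i))
            have hqb0 : ∀ i : Fin ℓ, q (Fb i 0) = Fa 0 1 := by
              intro i
              rw [hq]
              simp only
              rw [if_pos]
              rw [hQdef]
              exact Finset.mem_union_right _ (Finset.mem_image_of_mem _ (Finset.mem_univ i))
            set S01E : Multiset (Sym2 α) := E4w (fun i : Fin ℓ => Fa i 1)
              (fun i : Fin ℓ => Fc i 0) (fun i : Fin ℓ => Fb i 0)
              (fun i : Fin ℓ => Fc i 1) with hS01
            set S10E : Multiset (Sym2 α) := E4w (fun i : Fin ℓ => Fa i 0)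
              (fun i : Fin ℓ => Fc i 0) (fun i : Fin ℓ => Fb i 1)
              (fun i : Fin ℓ => Fc i 1) with hS10
            have hsplit : CL1 + CL2 = S01E + S10E := by
              rw [hCL1, hCL2, hS01, hS10, E4w, E4w, E4w, E4w,
                ← Finset.sum_add_distrib, ← Finset.sum_add_distrib]
              exact Finset.sum_congr rfl fun i _ => perm8' _ _ _ _ _ _ _ _
            have hq2T : ∀ e, Even ((Multiset.map (Sym2.map q) S01E).count e) := by
              have hmap : Multiset.map (Sym2.map q) S01E =
                  (∑ i : Fin ℓ, ({s(Fc i 0, Fa 0 1), s(Fc i 1, Fa 0 1)} :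
                    Multiset (Sym2 α)))
                  + (∑ i : Fin ℓ, ({s(Fc i 0, Fa 0 1), s(Fc i 1, Fa 0 1)} :
                    Multiset (Sym2 α))) := by
                rw [hS01, E4w, map_finsum_ms, ← Finset.sum_add_distrib]
                refine Finset.sum_congr rfl fun i _ => ?_
                show Multiset.map (Sym2.map q) _ = _
                rw [show ∀ (a b c d : Sym2 α),
                    Multiset.map (Sym2.map q) ({a,b,c,d} : Multiset (Sym2 α)) =
                    {Sym2.map q a, Sym2.map q b, Sym2.map q c, Sym2.map q d} from
                    fun a b c d => by
                      simp [Multiset.insert_eq_cons, Multiset.map_cons, Multiset.map_singleton]]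
                simp only [Sym2.map_pair_eq, hqC, hqa1, hqb0]
                exact pair4 _ _
              intro e
              rw [hmap, Multiset.count_add]
              exact ⟨_, rfl⟩
            have hq2Mc : ∀ e, Even ((Multiset.map (Sym2.map q) (CL1 + CL2)).count e) :=
              even_map hMce (Sym2.map q)
            have hq2S : ∀ e, Even ((Multiset.map (Sym2.map q) S10E).count e) := by
              intro e
              have heq : (Multiset.map (Sym2.map q) S01E).count e
                  + (Multiset.map (Sym2.map q) S10E).count e
                  = (Multiset.map (Sym2.map q) (CL1 + CL2)).count e := by
                rw [hsplit, Multiset.map_add, Multiset.count_add]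
              have h1 := hq2T e
              have h2 := hq2Mc e
              rw [Nat.even_iff] at h1 h2 ⊢
              omega
            have hRq : ∀ k, 0 < k → k < 4*ℓ →
                s((fun j => q (u4w (fun i : Fin ℓ => Fa i 0)
                  (fun i : Fin ℓ => Fc i 0) (fun i : Fin ℓ => Fb i 1)
                  (fun i : Fin ℓ => Fc i 1) j)) (k-1),
                  (fun j => q (u4w (fun i : Fin ℓ => Fa i 0)
                  (fun i : Fin ℓ => Fc i 0) (fun i : Fin ℓ => Fb i 1)
                  (fun i : Fin ℓ => Fc i 1) j)) k) ∈ Multiset.map (Sym2.map q) S10E := by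
              intro k h1 h2
              have hm := u4w_hR (fun i : Fin ℓ => Fa i 0) (fun i : Fin ℓ => Fc i 0)
                (fun i : Fin ℓ => Fb i 1) (fun i : Fin ℓ => Fc i 1) k h1 h2
              rw [← hS10] at hm
              simp only
              rw [← Sym2.map_pair_eq q]
              exact Multiset.mem_map_of_mem _ hm
            have hb := two_walks
              (u2w (fun i : Fin ℓ => Fa i 1) (fun i : Fin ℓ => Fb i 0))
              (fun j => q (u4w (fun i : Fin ℓ => Fa i 0)
                (fun i : Fin ℓ => Fc i 0) (fun i : Fin ℓ => Fb i 1)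
                (fun i : Fin ℓ => Fc i 1) j))
              (2*ℓ) (4*ℓ)
              (E2w (fun i : Fin ℓ => Fa i 1) (fun i : Fin ℓ => Fb i 0))
              (Multiset.map (Sym2.map q) S10E)
              (u2w_hR _ _) hRq
              (fun e => by rw [Multiset.count_add]; exact (hMUe e).add (hq2S e))
            set IX : Finset α := (Finset.range (2*ℓ)).image
              (u2w (fun i : Fin ℓ => Fa i 1) (fun i : Fin ℓ => Fb i 0)) with hIX
            set IQ : Finset α := (Finset.range (4*ℓ)).image
              (fun j => q (u4w (fun i : Fin ℓ => Fa i 0)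
                (fun i : Fin ℓ => Fc i 0) (fun i : Fin ℓ => Fb i 1)
                (fun i : Fin ℓ => Fc i 1) j)) with hIQ
            have hcovX : ∀ i : Fin ℓ, Fa i 1 ∈ IX ∧ Fb i 0 ∈ IX := by
              intro i
              have := u2w_cover (fun i : Fin ℓ => Fa i 1) (fun i : Fin ℓ => Fb i 0) i
              rw [hIX]; exact this
            have hIQmem : ∀ v, v ∈ (Finset.range (4*ℓ)).image
                (u4w (fun i : Fin ℓ => Fa i 0) (fun i : Fin ℓ => Fc i 0)
                  (fun i : Fin ℓ => Fb i 1) (fun i : Fin ℓ => Fc i 1)) → q v ∈ IQ := by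
              intro v hv
              obtain ⟨j, hj, rfl⟩ := Finset.mem_image.mp hv
              rw [hIQ]
              exact Finset.mem_image.mpr ⟨j, hj, rfl⟩
            have hQmemX : ∀ v, v ∈ Q → v ∈ IX := by
              intro v hv
              rw [hQdef] at hv
              rcases Finset.mem_union.mp hv with h|h <;>
                obtain ⟨i, _, rfl⟩ := Finset.mem_image.mp h
              · exact (hcovX i).1
              · exact (hcovX i).2
            have hsub : VA ∪ VB ∪ DC ⊆ IX ∪ IQ := by
              have hgen : ∀ v, v ∈ (Finset.range (4*ℓ)).image
                  (u4w (fun i : Fin ℓ => Fa i 0) (fun i : Fin ℓ => Fc i 0)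
                    (fun i : Fin ℓ => Fb i 1) (fun i : Fin ℓ => Fc i 1)) →
                  v ∈ IX ∪ IQ := by
                intro v hv
                by_cases hvQ : v ∈ Q
                · exact Finset.mem_union_left _ (hQmemX v hvQ)
                · have : q v = v := by rw [hq]; simp only; rw [if_neg hvQ]
                  exact Finset.mem_union_right _ (this ▸ hIQmem v hv)
              refine Finset.union_subset (Finset.union_subset ?_ ?_) ?_
              · refine hVAsub _ (fun i => hgen _ (u4w_cover _ _ _ _ i).1)
                  (fun i => Finset.mem_union_left _ (hcovX i).1)
              · refine hVBsub _ (fun i => Finset.mem_union_left _ (hcovX i).2)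
                  (fun i => hgen _ (u4w_cover _ _ _ _ i).2.2.1)
              · refine hDCsub _ fun i x => ?_
                rcases fin2 x with h|h <;> rw [h]
                · have := hIQmem _ (u4w_cover _ _ _ _ i).2.1
                  rw [hqC] at this
                  exact Finset.mem_union_right _ this
                · have := hIQmem _ (u4w_cover _ _ _ _ i).2.2.2
                  rw [hqC] at this
                  exact Finset.mem_union_right _ this
            have hcard := Finset.card_le_card hsub
            have hcS : Multiset.card (Multiset.map (Sym2.map q) S10E) = 4*ℓ := by
              rw [Multiset.card_map, hS10]
              exact E4w_card _ _ _ _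
            rw [E2w_card, hcS] at hb
            omega
          · -- U empty, contradiction
            obtain ⟨z, hz⟩ := hUne
            obtain ⟨z1, z2⟩ := z
            rcases fin2 z1 with rfl|rfl <;> rcases fin2 z2 with rfl|rfl <;> tauto
  · -- empty case
    intro hUe
    have hb := two_walks _ _ (4*ℓ) (4*ℓ) CL1 CL2 hR1 hR2 hMce
    rw [← hI1, ← hI2] at hb
    have hsub : VA ∪ VB ∪ DC ⊆ I1 ∪ I2 := by
      refine Finset.union_subset (Finset.union_subset ?_ ?_) ?_
      · exact hVAsub _ (fun i => Finset.mem_union_left _ (hcov1 i).1)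
          (fun i => Finset.mem_union_right _ (hcov2 i).1)
      · exact hVBsub _ (fun i => Finset.mem_union_left _ (hcov1 i).2.2.1)
          (fun i => Finset.mem_union_right _ (hcov2 i).2.2.1)
      · refine hDCsub _ fun i x => ?_
        rcases fin2 x with h|h <;> rw [h]
        exacts [Finset.mem_union_left _ (hcov1 i).2.1,
          Finset.mem_union_left _ (hcov1 i).2.2.2]
    have hcard := Finset.card_le_card hsub
    rw [hcCL1, hcCL2] at hb
    omega
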